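/- arXiv:2107.00426 — 5 statements merged into one kernel-verified Lean document; each statement's English description precedes it below -/
import Mathlib

section
/- Let n > n' ≥ 1 and let M be a real symmetric n×n matrix. Let M' be the leading principal n'×n' submatrix of M (so M'ᵢⱼ = Mᵢⱼ for all 1 ≤ i, j ≤ n'). Write σ_M = sig(M), σ_{M'} = sig(M'), k = nul(M), and k' = nul(M'). Then |σ_M − σ_{M'}| ≤ (n − n') − (k − k'). -/
/-- The signature of a real symmetric (Hermitian) matrix: the number of positive
eigenvalues minus the number of negative eigenvalues, counted with multiplicity. -/
noncomputable def matSig {m : Type} [Fintype m] [DecidableEq m]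
    (M : Matrix m m ℝ) : ℤ := by
  classical
  exact if hM : M.IsHermitian then
    ((Finset.univ.filter fun i => 0 < hM.eigenvalues i).card : ℤ) -
    ((Finset.univ.filter fun i => hM.eigenvalues i < 0).card : ℤ)
  else 0

/-- The nullity of a real matrix: the size minus the rank (equivalently, the
multiplicity of the eigenvalue 0 for a symmetric matrix). -/
noncomputable def matNul {m : Type} [Fintype m] [DecidableEq m]
    (M : Matrix m m ℝ) : ℕ :=
  Fintype.card m - M.rank

namespace SigAux

open Matrix Finset Module RealInnerProductSpace

variable {N : ℕ} {A : Matrix (Fin N) (Fin N) ℝ}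

lemma coeff_zero (hA : A.IsHermitian) {S : Finset (Fin N)} {x : EuclideanSpace ℝ (Fin N)}
    (hx : x ∈ Submodule.span ℝ (hA.eigenvectorBasis '' ↑S)) {i : Fin N} (hi : i ∉ S) :
    ⟪hA.eigenvectorBasis i, x⟫ = 0 := by
  induction hx using Submodule.span_induction with
  | mem y hy =>
    obtain ⟨j, hj, rfl⟩ := hy
    have ho := hA.eigenvectorBasis.orthonormal
    rw [orthonormal_iff_ite] at ho
    rw [ho]
    simp only [ite_eq_right_iff]
    rintro rfl
    exact absurd hj hi
  | zero => simp
  | add _ _ _ _ h1 h2 => simp [inner_add_right, h1, h2]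
  | smul c _ _ h => simp [inner_smul_right, h]

lemma quad_eq_sum (hA : A.IsHermitian) (x : EuclideanSpace ℝ (Fin N)) :
    ⟪x, Matrix.toEuclideanLin A x⟫ =
      ∑ i, hA.eigenvalues i * ⟪hA.eigenvectorBasis i, x⟫ ^ 2 := by
  have hsym : (Matrix.toEuclideanLin A).IsSymmetric :=
    Matrix.isHermitian_iff_isSymmetric.1 hA
  have key : ∀ i, Matrix.toEuclideanLin A (hA.eigenvectorBasis i)
      = hA.eigenvalues i • hA.eigenvectorBasis i := fun i => by
    apply (WithLp.equiv 2 (Fin N → ℝ)).injective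
    simp only [WithLp.equiv_apply, Matrix.ofLp_toEuclideanLin_apply]
    simpa using hA.mulVec_eigenvectorBasis i
  rw [← OrthonormalBasis.sum_inner_mul_inner hA.eigenvectorBasis]
  refine Finset.sum_congr rfl fun i _ => ?_
  have h2 : ⟪hA.eigenvectorBasis i, Matrix.toEuclideanLin A x⟫ =
      hA.eigenvalues i * ⟪hA.eigenvectorBasis i, x⟫ := by
    rw [← hsym, key i, real_inner_smul_left]
  rw [h2, real_inner_comm x]
  ring

lemma finrank_span_eigen (hA : A.IsHermitian) (S : Finset (Fin N)) :
    finrank ℝ (Submodule.span ℝ (hA.eigenvectorBasis '' ↑S) :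
      Submodule ℝ (EuclideanSpace ℝ (Fin N))) = S.card := by
  classical
  have hli : LinearIndependent ℝ (fun i : S => hA.eigenvectorBasis i) :=
    hA.eigenvectorBasis.orthonormal.linearIndependent.comp _ Subtype.val_injective
  have hr : Set.range (fun i : S => hA.eigenvectorBasis i) = hA.eigenvectorBasis '' ↑S := by
    ext y; simp
  rw [← hr, finrank_span_eq_card hli, Fintype.card_coe]

/-- Dimension bound: a subspace on which `ε * Q_A` is positive on nonzero vectors has
dimension at most the number of eigenvalues `μ` with `0 < ε * μ`. -/
lemma dim_le (hA : A.IsHermitian) (ε : ℝ) (W : Submodule ℝ (EuclideanSpace ℝ (Fin N)))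
    (hW : ∀ x ∈ W, x ≠ 0 → 0 < ε * ⟪x, Matrix.toEuclideanLin A x⟫) :
    finrank ℝ W ≤ (Finset.univ.filter fun i => 0 < ε * hA.eigenvalues i).card := by
  classical
  set S : Finset (Fin N) := Finset.univ.filter fun i => ¬ 0 < ε * hA.eigenvalues i with hS
  set Nsp : Submodule ℝ (EuclideanSpace ℝ (Fin N)) :=
    Submodule.span ℝ (hA.eigenvectorBasis '' ↑S) with hNsp
  have hdisj : W ⊓ Nsp = ⊥ := by
    rw [Submodule.eq_bot_iff]
    rintro x ⟨hxW, hxN⟩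
    by_contra hx0
    have hpos := hW x hxW hx0
    rw [quad_eq_sum hA, Finset.mul_sum] at hpos
    have hnonpos : ∀ i ∈ Finset.univ,
        ε * (hA.eigenvalues i * ⟪hA.eigenvectorBasis i, x⟫ ^ 2) ≤ 0 := by
      intro i _
      by_cases hi : i ∈ S
      · have : ¬ 0 < ε * hA.eigenvalues i := by simpa [hS] using hi
        have h1 : ε * hA.eigenvalues i ≤ 0 := le_of_not_gt this
        have h2 : (0:ℝ) ≤ ⟪hA.eigenvectorBasis i, x⟫ ^ 2 := sq_nonneg _
        nlinarith
      · rw [coeff_zero hA hxN hi]; ring_nf; simp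
    exact absurd (Finset.sum_nonpos hnonpos) (not_le.2 hpos)
  have heq := Submodule.finrank_sup_add_finrank_inf_eq W Nsp
  rw [hdisj, finrank_bot, add_zero] at heq
  have hle : finrank ℝ (W ⊔ Nsp : Submodule ℝ (EuclideanSpace ℝ (Fin N))) ≤ N := by
    simpa [finrank_euclideanSpace] using Submodule.finrank_le (W ⊔ Nsp)
  have hNdim : finrank ℝ Nsp = S.card := finrank_span_eigen hA S
  have hcards := Finset.card_filter_add_card_filter_not
    (s := Finset.univ) (p := fun i => 0 < ε * hA.eigenvalues i)
  simp only [Finset.card_univ, Fintype.card_fin] at hcards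
  have hSS : (Finset.univ.filter fun i => ¬ 0 < ε * hA.eigenvalues i) = S := by
    ext i; simp [hS]
  rw [hSS] at hcards
  omega

/-- The span of eigenvectors with `0 < ε * μ` is positive for `ε * Q_A` on nonzero vectors. -/
lemma span_quad (hA : A.IsHermitian) (ε : ℝ) :
    ∀ x ∈ (Submodule.span ℝ (hA.eigenvectorBasis ''
        ↑(Finset.univ.filter fun i => 0 < ε * hA.eigenvalues i)) :
        Submodule ℝ (EuclideanSpace ℝ (Fin N))), x ≠ 0 →
      0 < ε * ⟪x, Matrix.toEuclideanLin A x⟫ := by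
  classical
  intro x hx hx0
  rw [quad_eq_sum hA, Finset.mul_sum]
  set T := Finset.univ.filter fun i => 0 < ε * hA.eigenvalues i with hT
  have hnn : ∀ i ∈ Finset.univ,
      0 ≤ ε * (hA.eigenvalues i * ⟪hA.eigenvectorBasis i, x⟫ ^ 2) := by
    intro i _
    by_cases hi : i ∈ T
    · have : 0 < ε * hA.eigenvalues i := by simpa [hT] using hi
      nlinarith [sq_nonneg ⟪hA.eigenvectorBasis i, x⟫]
    · rw [coeff_zero hA hx hi]; ring_nf; simp
  have hex : ∃ i ∈ Finset.univ,
      0 < ε * (hA.eigenvalues i * ⟪hA.eigenvectorBasis i, x⟫ ^ 2) := by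
    by_contra hc
    push_neg at hc
    apply hx0
    have hall : ∀ i, ⟪hA.eigenvectorBasis i, x⟫ = 0 := by
      intro i
      by_cases hi : i ∈ T
      · have hεμ : 0 < ε * hA.eigenvalues i := by simpa [hT] using hi
        have h1 := hc i (Finset.mem_univ i)
        have h2 := hnn i (Finset.mem_univ i)
        have h3 : ε * (hA.eigenvalues i * ⟪hA.eigenvectorBasis i, x⟫ ^ 2) = 0 :=
          le_antisymm h1 h2
        by_contra hne
        have : 0 < ⟪hA.eigenvectorBasis i, x⟫ ^ 2 := by positivity
        nlinarith
      · exact coeff_zero hA hx hi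
    have := hA.eigenvectorBasis.sum_repr' x
    simp only [hall, zero_smul, Finset.sum_const_zero] at this
    exact this.symm
  exact Finset.sum_pos' hnn hex

/-- Extension by zero of a vector in `ℝ^{n'}` to `ℝ^n`, as a linear map. -/
noncomputable def extLin {n' n : ℕ} (h : n' ≤ n) :
    EuclideanSpace ℝ (Fin n') →ₗ[ℝ] EuclideanSpace ℝ (Fin n) where
  toFun x := WithLp.toLp 2 (fun i => if h2 : (i : ℕ) < n' then x ⟨i, h2⟩ else 0)
  map_add' x y := by
    ext i
    by_cases h2 : (i : ℕ) < n' <;> simp [h2, PiLp.add_apply]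
  map_smul' c x := by
    ext i
    by_cases h2 : (i : ℕ) < n' <;> simp [h2, PiLp.smul_apply]

lemma extLin_castLE {n' n : ℕ} (h : n' ≤ n) (x : EuclideanSpace ℝ (Fin n')) (i : Fin n') :
    extLin h x (Fin.castLE h i) = x i := by
  simp [extLin, Fin.castLE]

lemma extLin_zero {n' n : ℕ} (h : n' ≤ n) (x : EuclideanSpace ℝ (Fin n')) (i : Fin n)
    (hi : n' ≤ (i : ℕ)) : extLin h x i = 0 := by
  simp [extLin, not_lt.2 hi]

lemma extLin_inj {n' n : ℕ} (h : n' ≤ n) : Function.Injective (extLin h) := by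
  intro x y hxy
  ext i
  have := congrFun (congrArg (fun z : EuclideanSpace ℝ (Fin n) => (z : Fin n → ℝ)) hxy)
    (Fin.castLE h i)
  simpa [extLin_castLE] using this

lemma sum_castLE {n' n : ℕ} (h : n' ≤ n) (f : Fin n → ℝ)
    (hf : ∀ i : Fin n, n' ≤ (i : ℕ) → f i = 0) :
    ∑ i' : Fin n', f (Fin.castLE h i') = ∑ i, f i := by
  have h1 : ∑ i' : Fin n', f (Fin.castLE h i')
      = ∑ i ∈ Finset.univ.map (Fin.castLEEmb h), f i := by
    rw [Finset.sum_map]; rfl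
  rw [h1]
  apply Finset.sum_subset (Finset.subset_univ _)
  intro i _ hi
  apply hf
  by_contra hlt
  push_neg at hlt
  exact hi (Finset.mem_map.2 ⟨⟨i, hlt⟩, Finset.mem_univ _, rfl⟩)

lemma quad_ext {n' n : ℕ} (h : n' ≤ n) (M : Matrix (Fin n) (Fin n) ℝ)
    (M' : Matrix (Fin n') (Fin n') ℝ)
    (hM' : ∀ i j : Fin n', M' i j = M (Fin.castLE h i) (Fin.castLE h j))
    (x : EuclideanSpace ℝ (Fin n')) :
    ⟪extLin h x, Matrix.toEuclideanLin M (extLin h x)⟫ =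
      ⟪x, Matrix.toEuclideanLin M' x⟫ := by
  have hinner : ∀ (k : ℕ) (u v : EuclideanSpace ℝ (Fin k)), ⟪u, v⟫ = ∑ i, u i * v i := by
    intro k u v
    simp [PiLp.inner_apply, RCLike.inner_apply, conj_trivial]
    exact Finset.sum_congr rfl fun _ _ => mul_comm _ _
  rw [hinner, hinner]
  have happ : ∀ (y : EuclideanSpace ℝ (Fin n)) (i : Fin n),
      (Matrix.toEuclideanLin M y) i = (M *ᵥ (y : Fin n → ℝ)) i := fun _ _ => rfl
  have happ' : ∀ (y : EuclideanSpace ℝ (Fin n')) (i : Fin n'),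
      (Matrix.toEuclideanLin M' y) i = (M' *ᵥ (y : Fin n' → ℝ)) i := fun _ _ => rfl
  simp only [happ, happ']
  rw [← sum_castLE h (fun i => extLin h x i * (M *ᵥ (extLin h x : Fin n → ℝ)) i)
    (fun i hi => by dsimp only; rw [extLin_zero h x i hi, zero_mul])]
  refine Finset.sum_congr rfl fun i _ => ?_
  rw [extLin_castLE]
  congr 1
  show ∑ j, M (Fin.castLE h i) j * extLin h x j = ∑ j, M' i j * x j
  rw [← sum_castLE h (fun j => M (Fin.castLE h i) j * extLin h x j)
    (fun j hj => by dsimp only; rw [extLin_zero h x j hj, mul_zero])]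
  refine Finset.sum_congr rfl fun j _ => ?_
  rw [extLin_castLE, hM' i j]

/-- Monotonicity of inertia counts under taking a leading principal submatrix. -/
lemma card_le {n' n : ℕ} (h : n' ≤ n) (M : Matrix (Fin n) (Fin n) ℝ)
    (M' : Matrix (Fin n') (Fin n') ℝ) (hMh : M.IsHermitian) (hM'h : M'.IsHermitian)
    (hM' : ∀ i j : Fin n', M' i j = M (Fin.castLE h i) (Fin.castLE h j)) (ε : ℝ) :
    (Finset.univ.filter fun i => 0 < ε * hM'h.eigenvalues i).card ≤
      (Finset.univ.filter fun i => 0 < ε * hMh.eigenvalues i).card := by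
  classical
  set P' : Submodule ℝ (EuclideanSpace ℝ (Fin n')) :=
    Submodule.span ℝ (hM'h.eigenvectorBasis ''
      ↑(Finset.univ.filter fun i => 0 < ε * hM'h.eigenvalues i)) with hP'
  set W : Submodule ℝ (EuclideanSpace ℝ (Fin n)) := P'.map (extLin h) with hW
  have hWdim : finrank ℝ W = finrank ℝ P' :=
    (Submodule.equivMapOfInjective (extLin h) (extLin_inj h) P').finrank_eq.symm
  have hP'dim : finrank ℝ P' = (Finset.univ.filter fun i => 0 < ε * hM'h.eigenvalues i).card :=
    finrank_span_eigen hM'h _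
  have hbound := dim_le hMh ε W ?_
  · omega
  · rintro x ⟨x', hx', rfl⟩ hx0
    rw [quad_ext h M M' hM']
    refine span_quad hM'h ε x' hx' fun h0 => hx0 ?_
    rw [h0]; exact map_zero _

end SigAux

open SigAux Matrix Finset Module RealInnerProductSpace in
/-- Let `n > n' ≥ 1` and let `M` be a real symmetric `n × n` matrix.  Let `M'` be the
leading principal `n' × n'` submatrix of `M`.  Then
`|sig M − sig M'| ≤ (n − n') − (nul M − nul M')`. -/
theorem leading_principal_submatrix_sig_nul_bound
    (n n' : ℕ) (hn' : 1 ≤ n') (hlt : n' < n)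
    (M : Matrix (Fin n) (Fin n) ℝ) (hM : M.IsSymm)
    (M' : Matrix (Fin n') (Fin n') ℝ)
    (hM' : ∀ i j : Fin n', M' i j = M (Fin.castLE hlt.le i) (Fin.castLE hlt.le j)) :
    |matSig M - matSig M'| ≤ ((n : ℤ) - (n' : ℤ)) - ((matNul M : ℤ) - (matNul M' : ℤ)) := by
  classical
  have hMh : M.IsHermitian := by
    rwa [Matrix.IsHermitian, Matrix.conjTranspose_eq_transpose_of_trivial]
  have hM'symm : M'.IsSymm := by
    have hij : ∀ i j, M i j = M j i := fun i j => by
      have h0 := congrFun (congrFun hM j) i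
      rwa [Matrix.transpose_apply] at h0
    show M'ᵀ = M'
    ext i j
    rw [Matrix.transpose_apply, hM', hM', hij]
  have hM'h : M'.IsHermitian := by
    rwa [Matrix.IsHermitian, Matrix.conjTranspose_eq_transpose_of_trivial]
  -- inertia counts
  set p := (Finset.univ.filter fun i => 0 < hMh.eigenvalues i).card with hp
  set q := (Finset.univ.filter fun i => hMh.eigenvalues i < 0).card with hq
  set p' := (Finset.univ.filter fun i => 0 < hM'h.eigenvalues i).card with hp'
  set q' := (Finset.univ.filter fun i => hM'h.eigenvalues i < 0).card with hq'
  have hsigM : matSig M = (p : ℤ) - q := by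
    simp only [matSig]
    rw [dif_pos hMh]
  have hsigM' : matSig M' = (p' : ℤ) - q' := by
    simp only [matSig]
    rw [dif_pos hM'h]
  -- monotonicity of counts
  have hple : p' ≤ p := by
    have := card_le hlt.le M M' hMh hM'h hM' 1
    simpa [one_mul] using this
  have hqle : q' ≤ q := by
    have h2 := card_le hlt.le M M' hMh hM'h hM' (-1)
    have e1 : (Finset.univ.filter fun i => 0 < (-1:ℝ) * hMh.eigenvalues i) =
        (Finset.univ.filter fun i => hMh.eigenvalues i < 0) := by
      ext i; simp
    have e2 : (Finset.univ.filter fun i => 0 < (-1:ℝ) * hM'h.eigenvalues i) =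
        (Finset.univ.filter fun i => hM'h.eigenvalues i < 0) := by
      ext i; simp
    rw [e1, e2] at h2
    exact h2
  -- rank equals p + q
  have hrank : ∀ {k : ℕ} (A : Matrix (Fin k) (Fin k) ℝ) (hA : A.IsHermitian),
      A.rank = (Finset.univ.filter fun i => 0 < hA.eigenvalues i).card +
        (Finset.univ.filter fun i => hA.eigenvalues i < 0).card := by
    intro k A hA
    rw [hA.rank_eq_card_non_zero_eigs, Fintype.card_subtype]
    have hu : (Finset.univ.filter fun i => hA.eigenvalues i ≠ 0) =
        (Finset.univ.filter fun i => 0 < hA.eigenvalues i) ∪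
        (Finset.univ.filter fun i => hA.eigenvalues i < 0) := by
      ext i
      simp only [Finset.mem_filter, Finset.mem_union, Finset.mem_univ, true_and]
      constructor
      · intro hne
        rcases lt_or_gt_of_ne hne with h | h
        · exact Or.inr h
        · exact Or.inl h
      · rintro (h | h) <;> intro h0 <;> rw [h0] at h <;> exact lt_irrefl _ h
    rw [hu, Finset.card_union_of_disjoint]
    rw [Finset.disjoint_left]
    intro i hi1 hi2
    simp only [Finset.mem_filter] at hi1 hi2
    linarith [hi1.2, hi2.2]
  have hrM : M.rank = p + q := hrank M hMh
  have hrM' : M'.rank = p' + q' := hrank M' hM'h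
  have hrMle : M.rank ≤ n := by
    simpa using M.rank_le_card_width
  have hrM'le : M'.rank ≤ n' := by
    simpa using M'.rank_le_card_width
  have hnulM : (matNul M : ℤ) = (n : ℤ) - (p + q : ℕ) := by
    rw [matNul, Fintype.card_fin, hrM] at *
    have : p + q ≤ n := hrM ▸ hrMle
    omega
  have hnulM' : (matNul M' : ℤ) = (n' : ℤ) - (p' + q' : ℕ) := by
    rw [matNul, Fintype.card_fin, hrM'] at *
    have : p' + q' ≤ n' := hrM' ▸ hrM'le
    omega
  rw [hsigM, hsigM', hnulM, hnulM', abs_sub_le_iff]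
  push_cast
  constructor <;> [skip; skip] <;> omega
end

section
/- Let G and G' be real symmetric n×n matrices that agree in every entry except the (1,1) entry, where G'₁₁ = G₁₁ + 2. If nul(G) = nul(G'), then either sig(G') = sig(G) or sig(G') = sig(G) + 2. -/
namespace SigAux

open Matrix Finset Module

variable {n : ℕ}

/-- The quadratic form of a matrix on Euclidean space. -/
noncomputable def quad (M : Matrix (Fin n) (Fin n) ℝ) (x : EuclideanSpace ℝ (Fin n)) : ℝ :=
  inner ℝ x (Matrix.toEuclideanLin M x)

lemma quad_eq_dot (M : Matrix (Fin n) (Fin n) ℝ) (x : EuclideanSpace ℝ (Fin n)) :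
    quad M x = ∑ i, x i * (M.mulVec x) i := by
  simp [quad, PiLp.inner_apply, Matrix.toEuclideanLin_apply]
  exact Finset.sum_congr rfl fun _ _ => mul_comm _ _

lemma toEuclideanLin_eigenvector {M : Matrix (Fin n) (Fin n) ℝ} (hM : M.IsHermitian) (j : Fin n) :
    Matrix.toEuclideanLin M (hM.eigenvectorBasis j) = hM.eigenvalues j • hM.eigenvectorBasis j := by
  ext i
  have := congrFun (hM.mulVec_eigenvectorBasis j) i
  simpa [Matrix.toEuclideanLin_apply] using this

lemma quad_eq_sum_s3 {M : Matrix (Fin n) (Fin n) ℝ} (hM : M.IsHermitian)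
    (x : EuclideanSpace ℝ (Fin n)) :
    quad M x = ∑ j, hM.eigenvalues j * (hM.eigenvectorBasis.repr x j)^2 := by
  set b := hM.eigenvectorBasis with hb
  set T := Matrix.toEuclideanLin M with hT
  have hsym : LinearMap.IsSymmetric T := (Matrix.isHermitian_iff_isSymmetric.1 hM)
  have hrepr : ∀ j, b.repr (T x) j = hM.eigenvalues j * b.repr x j := by
    intro j
    rw [b.repr_apply_apply, b.repr_apply_apply, ← hsym (b j) x,
      toEuclideanLin_eigenvector hM j, inner_smul_left]
    simp [hb]
  have h1 : quad M x = inner ℝ (b.repr x) (b.repr (T x)) :=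
    (b.repr.inner_map_map x (T x)).symm
  rw [h1, PiLp.inner_apply]
  refine Finset.sum_congr rfl fun j _ => ?_
  rw [hrepr j]
  simp [pow_two]
  ring

/-- Span of the eigenvectors indexed by a finite set. -/
noncomputable def spanE {M : Matrix (Fin n) (Fin n) ℝ} (hM : M.IsHermitian) (S : Finset (Fin n)) :
    Submodule ℝ (EuclideanSpace ℝ (Fin n)) :=
  Submodule.span ℝ (Set.range fun i : S => hM.eigenvectorBasis i)

lemma finrank_spanE {M : Matrix (Fin n) (Fin n) ℝ} (hM : M.IsHermitian) (S : Finset (Fin n)) :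
    finrank ℝ (spanE hM S) = S.card := by
  have li : LinearIndependent ℝ (fun i : S => hM.eigenvectorBasis i) :=
    (hM.eigenvectorBasis.orthonormal.linearIndependent).comp Subtype.val Subtype.val_injective
  rw [spanE, finrank_span_eq_card li, Fintype.card_coe]

lemma repr_eq_zero_of_mem_spanE {M : Matrix (Fin n) (Fin n) ℝ} {hM : M.IsHermitian}
    {S : Finset (Fin n)} {x : EuclideanSpace ℝ (Fin n)} (hx : x ∈ spanE hM S)
    {j : Fin n} (hj : j ∉ S) : hM.eigenvectorBasis.repr x j = 0 := by
  induction hx using Submodule.span_induction with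
  | mem y hy =>
    obtain ⟨i, rfl⟩ := hy
    rw [OrthonormalBasis.repr_self]
    have : j ≠ (i : Fin n) := fun h => hj (h ▸ i.2)
    simp [EuclideanSpace.single_apply, this]
  | zero => simp
  | add y z _ _ hy hz => simp [hy, hz]
  | smul a y _ hy => simp [hy]

lemma exists_repr_ne_zero {M : Matrix (Fin n) (Fin n) ℝ} (hM : M.IsHermitian)
    {x : EuclideanSpace ℝ (Fin n)} (hx : x ≠ 0) :
    ∃ j, hM.eigenvectorBasis.repr x j ≠ 0 := by
  by_contra h
  push_neg at h
  apply hx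
  have h0 : hM.eigenvectorBasis.repr x = 0 := by ext j; exact h j
  simpa using congrArg hM.eigenvectorBasis.repr.symm h0

lemma quad_pos_of_mem {M : Matrix (Fin n) (Fin n) ℝ} (hM : M.IsHermitian)
    {x : EuclideanSpace ℝ (Fin n)}
    (hx : x ∈ spanE hM (Finset.univ.filter fun i => 0 < hM.eigenvalues i)) (h0 : x ≠ 0) :
    0 < quad M x := by
  rw [quad_eq_sum_s3 hM]
  obtain ⟨j, hj⟩ := exists_repr_ne_zero hM h0
  have hjS : j ∈ Finset.univ.filter fun i => 0 < hM.eigenvalues i := by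
    by_contra hjS
    exact hj (repr_eq_zero_of_mem_spanE hx hjS)
  have hjpos : 0 < hM.eigenvalues j := (Finset.mem_filter.1 hjS).2
  refine Finset.sum_pos' (fun i _ => ?_) ⟨j, Finset.mem_univ j, ?_⟩
  · by_cases hiS : i ∈ Finset.univ.filter fun k => 0 < hM.eigenvalues k
    · have := (Finset.mem_filter.1 hiS).2
      positivity
    · rw [repr_eq_zero_of_mem_spanE hx hiS]; simp
  · have : (0:ℝ) < (hM.eigenvectorBasis.repr x j)^2 := by positivity
    positivity

lemma quad_nonpos_of_mem {M : Matrix (Fin n) (Fin n) ℝ} (hM : M.IsHermitian)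
    {x : EuclideanSpace ℝ (Fin n)}
    (hx : x ∈ spanE hM (Finset.univ.filter fun i => hM.eigenvalues i ≤ 0)) :
    quad M x ≤ 0 := by
  rw [quad_eq_sum_s3 hM]
  refine Finset.sum_nonpos fun i _ => ?_
  by_cases hiS : i ∈ Finset.univ.filter fun k => hM.eigenvalues k ≤ 0
  · have h1 := (Finset.mem_filter.1 hiS).2
    have h2 : (0:ℝ) ≤ (hM.eigenvectorBasis.repr x i)^2 := sq_nonneg _
    exact mul_nonpos_of_nonpos_of_nonneg h1 h2
  · rw [repr_eq_zero_of_mem_spanE hx hiS]; simp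

lemma quad_neg_of_mem {M : Matrix (Fin n) (Fin n) ℝ} (hM : M.IsHermitian)
    {x : EuclideanSpace ℝ (Fin n)}
    (hx : x ∈ spanE hM (Finset.univ.filter fun i => hM.eigenvalues i < 0)) (h0 : x ≠ 0) :
    quad M x < 0 := by
  have key : 0 < ∑ j, (-hM.eigenvalues j) * (hM.eigenvectorBasis.repr x j)^2 := by
    obtain ⟨j, hj⟩ := exists_repr_ne_zero hM h0
    have hjS : j ∈ Finset.univ.filter fun i => hM.eigenvalues i < 0 := by
      by_contra hjS
      exact hj (repr_eq_zero_of_mem_spanE hx hjS)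
    have hjneg : hM.eigenvalues j < 0 := (Finset.mem_filter.1 hjS).2
    refine Finset.sum_pos' (fun i _ => ?_) ⟨j, Finset.mem_univ j, ?_⟩
    · by_cases hiS : i ∈ Finset.univ.filter fun k => hM.eigenvalues k < 0
      · have h1 := (Finset.mem_filter.1 hiS).2
        have h2 : (0:ℝ) ≤ -hM.eigenvalues i := by linarith
        positivity
      · rw [repr_eq_zero_of_mem_spanE hx hiS]; simp
    · have h1 : (0:ℝ) < -hM.eigenvalues j := by linarith
      have h2 : (0:ℝ) < (hM.eigenvectorBasis.repr x j)^2 := by positivity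
      positivity
  rw [quad_eq_sum_s3 hM]
  have : ∑ j, (-hM.eigenvalues j) * (hM.eigenvectorBasis.repr x j)^2
      = -∑ j, hM.eigenvalues j * (hM.eigenvectorBasis.repr x j)^2 := by
    rw [← Finset.sum_neg_distrib]
    exact Finset.sum_congr rfl fun j _ => by ring
  rw [this] at key
  linarith

lemma quad_nonneg_of_mem {M : Matrix (Fin n) (Fin n) ℝ} (hM : M.IsHermitian)
    {x : EuclideanSpace ℝ (Fin n)}
    (hx : x ∈ spanE hM (Finset.univ.filter fun i => 0 ≤ hM.eigenvalues i)) :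
    0 ≤ quad M x := by
  rw [quad_eq_sum_s3 hM]
  refine Finset.sum_nonneg fun i _ => ?_
  by_cases hiS : i ∈ Finset.univ.filter fun k => 0 ≤ hM.eigenvalues k
  · have h1 := (Finset.mem_filter.1 hiS).2
    positivity
  · rw [repr_eq_zero_of_mem_spanE hx hiS]; simp

lemma finrank_le_finrank_inf_ker_add_one {E : Type} [NormedAddCommGroup E]
    [InnerProductSpace ℝ E] [FiniteDimensional ℝ E]
    (A : Submodule ℝ E) (l : E →ₗ[ℝ] ℝ) :
    finrank ℝ A ≤ finrank ℝ (A ⊓ LinearMap.ker l : Submodule ℝ E) + 1 := by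
  set f : A →ₗ[ℝ] ℝ := l.comp A.subtype with hf
  have h1 : finrank ℝ (LinearMap.range f) + finrank ℝ (LinearMap.ker f) = finrank ℝ A :=
    LinearMap.finrank_range_add_finrank_ker f
  have h2 : LinearMap.ker f = Submodule.comap A.subtype (LinearMap.ker l) := by
    rw [hf, LinearMap.ker_comp]
  have h3 : finrank ℝ (LinearMap.ker f) = finrank ℝ (A ⊓ LinearMap.ker l : Submodule ℝ E) := by
    rw [h2, ← Submodule.map_comap_subtype, Submodule.finrank_map_subtype_eq]
  have h4 : finrank ℝ (LinearMap.range f) ≤ 1 := by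
    simpa using Submodule.finrank_le (LinearMap.range f)
  omega

lemma finrank_add_le_of_disjoint_quad (P W : Submodule ℝ (EuclideanSpace ℝ (Fin n)))
    (f : EuclideanSpace ℝ (Fin n) → ℝ)
    (hP : ∀ x ∈ P, x ≠ 0 → 0 < f x) (hW : ∀ x ∈ W, f x ≤ 0) :
    finrank ℝ P + finrank ℝ W ≤ n := by
  have hdisj : Disjoint P W := by
    rw [Submodule.disjoint_def]
    intro x hxP hxW
    by_contra h0
    exact absurd (hW x hxW) (not_le.2 (hP x hxP h0))
  have h := Submodule.finrank_add_finrank_le_of_disjoint hdisj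
  simpa [finrank_euclideanSpace] using h

lemma card_neg_filter_lt (f : Fin n → ℝ) :
    (Finset.univ.filter fun i => f i ≤ 0).card = n - (Finset.univ.filter fun i => 0 < f i).card := by
  classical
  have h := Finset.card_filter_add_card_filter_not
    (s := (Finset.univ : Finset (Fin n))) (p := fun i => 0 < f i)
  have he : (Finset.univ.filter fun i => ¬ 0 < f i) = Finset.univ.filter fun i => f i ≤ 0 := by
    apply Finset.filter_congr
    intro i _
    simp [not_lt]
  rw [he] at h
  simp only [Finset.card_univ, Fintype.card_fin] at h
  omega

lemma card_neg_filter_gt (f : Fin n → ℝ) :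
    (Finset.univ.filter fun i => 0 ≤ f i).card = n - (Finset.univ.filter fun i => f i < 0).card := by
  classical
  have h := Finset.card_filter_add_card_filter_not
    (s := (Finset.univ : Finset (Fin n))) (p := fun i => f i < 0)
  have he : (Finset.univ.filter fun i => ¬ f i < 0) = Finset.univ.filter fun i => 0 ≤ f i := by
    apply Finset.filter_congr
    intro i _
    simp [not_lt]
  rw [he] at h
  simp only [Finset.card_univ, Fintype.card_fin] at h
  omega

lemma card_partition (f : Fin n → ℝ) :
    (Finset.univ.filter fun i => 0 < f i).card + (Finset.univ.filter fun i => f i < 0).card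
      + (Finset.univ.filter fun i => f i = 0).card = n := by
  classical
  have h := Finset.card_filter_add_card_filter_not
    (s := (Finset.univ : Finset (Fin n))) (p := fun i => 0 < f i)
  have he : (Finset.univ.filter fun i => ¬ 0 < f i)
      = (Finset.univ.filter fun i => f i < 0) ∪ (Finset.univ.filter fun i => f i = 0) := by
    rw [← Finset.filter_or]
    apply Finset.filter_congr
    intro i _
    rw [not_lt, le_iff_lt_or_eq]
  have hd : Disjoint (Finset.univ.filter fun i => f i < 0)
      (Finset.univ.filter fun i => f i = 0) := by
    rw [Finset.disjoint_filter]
    intro i _ h1 h2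
    rw [h2] at h1; exact lt_irrefl 0 h1
  rw [he, Finset.card_union_of_disjoint hd] at h
  simp only [Finset.card_univ, Fintype.card_fin] at h
  omega

lemma matNul_eq {M : Matrix (Fin n) (Fin n) ℝ} (hM : M.IsHermitian) :
    matNul M = (Finset.univ.filter fun i => hM.eigenvalues i = 0).card := by
  classical
  rw [matNul, hM.rank_eq_card_non_zero_eigs, Fintype.card_subtype, Fintype.card_fin]
  have h := Finset.card_filter_add_card_filter_not
    (s := (Finset.univ : Finset (Fin n))) (p := fun i => hM.eigenvalues i ≠ 0)
  have he : (Finset.univ.filter fun i => ¬ hM.eigenvalues i ≠ 0)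
      = Finset.univ.filter fun i => hM.eigenvalues i = 0 := by
    apply Finset.filter_congr
    intro i _
    simp
  rw [he] at h
  simp only [Finset.card_univ, Fintype.card_fin] at h
  omega

lemma matSig_eq {M : Matrix (Fin n) (Fin n) ℝ} (hM : M.IsHermitian) :
    matSig M = ((Finset.univ.filter fun i => 0 < hM.eigenvalues i).card : ℤ)
      - ((Finset.univ.filter fun i => hM.eigenvalues i < 0).card : ℤ) := by
  rw [matSig]
  rw [dif_pos hM]

end SigAux

open SigAux Matrix Finset Module in
/-- If real symmetric `n × n` matrices `G` and `G'` agree in every entry except the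
`(1,1)` entry, where `G'₁₁ = G₁₁ + 2`, and `nul G = nul G'`, then
`sig G' = sig G` or `sig G' = sig G + 2`. -/
theorem sig_eq_or_eq_add_two_of_diag_entry_add_two
    (n : ℕ) (hn : 0 < n)
    (G G' : Matrix (Fin n) (Fin n) ℝ) (hG : G.IsSymm) (hG' : G'.IsSymm)
    (hdiag : G' ⟨0, hn⟩ ⟨0, hn⟩ = G ⟨0, hn⟩ ⟨0, hn⟩ + 2)
    (hoff : ∀ i j : Fin n, ¬(i = ⟨0, hn⟩ ∧ j = ⟨0, hn⟩) → G' i j = G i j)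
    (hnul : matNul G = matNul G') :
    matSig G' = matSig G ∨ matSig G' = matSig G + 2 := by
  classical
  set i0 : Fin n := ⟨0, hn⟩ with hi0
  have hGh : G.IsHermitian := by
    rw [Matrix.IsHermitian, Matrix.conjTranspose]
    exact Matrix.ext fun i j => by simpa using hG.apply i j
  have hGh' : G'.IsHermitian := by
    rw [Matrix.IsHermitian, Matrix.conjTranspose]
    exact Matrix.ext fun i j => by simpa using hG'.apply i j
  -- the quadratic forms differ by 2 x₀²
  have hquad : ∀ x : EuclideanSpace ℝ (Fin n), quad G' x = quad G x + 2 * (x i0)^2 := by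
    intro x
    rw [quad_eq_dot, quad_eq_dot]
    have hsplit : ∀ i, x i * (G'.mulVec x) i
        = x i * (G.mulVec x) i + x i * ∑ j, (G' i j - G i j) * x j := by
      intro i
      simp only [Matrix.mulVec, dotProduct]
      rw [← mul_add, ← Finset.sum_add_distrib]
      congr 1
      refine Finset.sum_congr rfl fun j _ => by ring
    simp only [hsplit]
    rw [Finset.sum_add_distrib]
    congr 1
    rw [Finset.sum_eq_single i0]
    · rw [Finset.sum_eq_single i0]
      · rw [hdiag]; ring
      · intro j _ hj
        rw [hoff i0 j (fun h => hj h.2)]; ring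
      · intro h; exact absurd (Finset.mem_univ _) h
    · intro i _ hi
      have hz : ∀ j, G' i j - G i j = 0 := fun j => by
        rw [hoff i j (fun h => hi h.1)]; ring
      simp [hz]
    · intro h; exact absurd (Finset.mem_univ _) h
  -- eigenvalue counts
  set p := (Finset.univ.filter fun i => 0 < hGh.eigenvalues i).card with hp
  set q := (Finset.univ.filter fun i => hGh.eigenvalues i < 0).card with hq
  set p' := (Finset.univ.filter fun i => 0 < hGh'.eigenvalues i).card with hp'
  set q' := (Finset.univ.filter fun i => hGh'.eigenvalues i < 0).card with hq'
  -- the coordinate functional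
  set l : EuclideanSpace ℝ (Fin n) →ₗ[ℝ] ℝ := PiLp.projₗ 2 (fun _ : Fin n => ℝ) i0 with hl
  have hlapp : ∀ x : EuclideanSpace ℝ (Fin n), l x = x i0 := fun x => rfl
  -- Inequality 1 : p ≤ p'
  have h1 : p + (n - p') ≤ n := by
    have := finrank_add_le_of_disjoint_quad
      (spanE hGh (Finset.univ.filter fun i => 0 < hGh.eigenvalues i))
      (spanE hGh' (Finset.univ.filter fun i => hGh'.eigenvalues i ≤ 0))
      (quad G')
      (fun x hx h0 => by
        have h1 := quad_pos_of_mem hGh hx h0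
        have h2 := hquad x
        nlinarith [sq_nonneg (x i0)])
      (fun x hx => quad_nonpos_of_mem hGh' hx)
    rwa [finrank_spanE, finrank_spanE, ← hp, card_neg_filter_lt, ← hp'] at this
  -- Inequality 2 : p' ≤ p + 1
  have h2 : p' + finrank ℝ
      ((spanE hGh (Finset.univ.filter fun i => hGh.eigenvalues i ≤ 0)) ⊓ LinearMap.ker l :
        Submodule ℝ (EuclideanSpace ℝ (Fin n))) ≤ n := by
    have := finrank_add_le_of_disjoint_quad
      (spanE hGh' (Finset.univ.filter fun i => 0 < hGh'.eigenvalues i))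
      ((spanE hGh (Finset.univ.filter fun i => hGh.eigenvalues i ≤ 0)) ⊓ LinearMap.ker l)
      (quad G')
      (fun x hx h0 => quad_pos_of_mem hGh' hx h0)
      (fun x hx => by
        have hxW := (Submodule.mem_inf.1 hx).1
        have hxK : l x = 0 := (Submodule.mem_inf.1 hx).2
        have h1 := quad_nonpos_of_mem hGh hxW
        have h2 := hquad x
        rw [hlapp] at hxK
        rw [hxK] at h2
        simpa [h2] using h1)
    rwa [finrank_spanE] at this
  have h2' : n - p ≤ finrank ℝ
      ((spanE hGh (Finset.univ.filter fun i => hGh.eigenvalues i ≤ 0)) ⊓ LinearMap.ker l :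
        Submodule ℝ (EuclideanSpace ℝ (Fin n))) + 1 := by
    have := finrank_le_finrank_inf_ker_add_one
      (spanE hGh (Finset.univ.filter fun i => hGh.eigenvalues i ≤ 0)) l
    rwa [finrank_spanE, card_neg_filter_lt, ← hp] at this
  -- Inequality 3 : q' ≤ q
  have h3 : q' + (n - q) ≤ n := by
    have := finrank_add_le_of_disjoint_quad
      (spanE hGh' (Finset.univ.filter fun i => hGh'.eigenvalues i < 0))
      (spanE hGh (Finset.univ.filter fun i => 0 ≤ hGh.eigenvalues i))
      (fun x => -quad G' x)
      (fun x hx h0 => by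
        show (0:ℝ) < -quad G' x
        have := quad_neg_of_mem hGh' hx h0; linarith)
      (fun x hx => by
        show -quad G' x ≤ 0
        have h1 := quad_nonneg_of_mem hGh hx
        have h2 := hquad x
        nlinarith [sq_nonneg (x i0)])
    rwa [finrank_spanE, finrank_spanE, ← hq', card_neg_filter_gt, ← hq] at this
  -- Inequality 4 : q ≤ q' + 1
  have h4 : q + finrank ℝ
      ((spanE hGh' (Finset.univ.filter fun i => 0 ≤ hGh'.eigenvalues i)) ⊓ LinearMap.ker l :
        Submodule ℝ (EuclideanSpace ℝ (Fin n))) ≤ n := by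
    have := finrank_add_le_of_disjoint_quad
      (spanE hGh (Finset.univ.filter fun i => hGh.eigenvalues i < 0))
      ((spanE hGh' (Finset.univ.filter fun i => 0 ≤ hGh'.eigenvalues i)) ⊓ LinearMap.ker l)
      (fun x => -quad G x)
      (fun x hx h0 => by
        show (0:ℝ) < -quad G x
        have := quad_neg_of_mem hGh hx h0; linarith)
      (fun x hx => by
        show -quad G x ≤ 0
        have hxW := (Submodule.mem_inf.1 hx).1
        have hxK : l x = 0 := (Submodule.mem_inf.1 hx).2
        have h1 := quad_nonneg_of_mem hGh' hxW
        have h2 := hquad x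
        rw [hlapp] at hxK
        rw [hxK] at h2
        nlinarith)
    rwa [finrank_spanE] at this
  have h4' : n - q' ≤ finrank ℝ
      ((spanE hGh' (Finset.univ.filter fun i => 0 ≤ hGh'.eigenvalues i)) ⊓ LinearMap.ker l :
        Submodule ℝ (EuclideanSpace ℝ (Fin n))) + 1 := by
    have := finrank_le_finrank_inf_ker_add_one
      (spanE hGh' (Finset.univ.filter fun i => 0 ≤ hGh'.eigenvalues i)) l
    rwa [finrank_spanE, card_neg_filter_gt, ← hq'] at this
  -- nullities and totals
  have hz : matNul G = (Finset.univ.filter fun i => hGh.eigenvalues i = 0).card := matNul_eq hGh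
  have hz' : matNul G' = (Finset.univ.filter fun i => hGh'.eigenvalues i = 0).card := matNul_eq hGh'
  have htot : p + q + (Finset.univ.filter fun i => hGh.eigenvalues i = 0).card = n :=
    card_partition _
  have htot' : p' + q' + (Finset.univ.filter fun i => hGh'.eigenvalues i = 0).card = n :=
    card_partition _
  -- conclude
  have hsig : matSig G = (p : ℤ) - q := matSig_eq hGh
  have hsig' : matSig G' = (p' : ℤ) - q' := matSig_eq hGh'
  have hpq : p + q = p' + q' := by omega
  have hple : p ≤ p' := by omega
  have hple' : p' ≤ p + 1 := by omega
  have hqle : q' ≤ q := by omega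
  have hqle' : q ≤ q' + 1 := by omega
  rcases eq_or_lt_of_le hple with heq | hlt
  · left
    have hqq : q' = q := by omega
    rw [hsig, hsig', ← heq, hqq]
  · right
    have hpp : p' = p + 1 := by omega
    have hqq : q = q' + 1 := by omega
    rw [hsig, hsig', hpp, hqq]
    push_cast
    ring
end

section
/- Let G and G' be real symmetric n×n matrices that agree in every entry except the (1,1) entry, where G'₁₁ = G₁₁ + 2. If nul(G) ≠ nul(G'), then sig(G') = sig(G) + 1. -/
section Aux

open scoped RealInnerProductSpace
open Finset Matrix Submodule

variable {n : ℕ}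

/-- The quadratic form of a matrix on Euclidean space. -/
noncomputable def quadAux (M : Matrix (Fin n) (Fin n) ℝ) (x : EuclideanSpace ℝ (Fin n)) : ℝ :=
  ⟪x, Matrix.toEuclideanLin M x⟫

lemma toEuclideanLin_eigenAux {M : Matrix (Fin n) (Fin n) ℝ} (hM : M.IsHermitian) (i : Fin n) :
    Matrix.toEuclideanLin M (hM.eigenvectorBasis i) =
      hM.eigenvalues i • hM.eigenvectorBasis i := by
  have h := hM.mulVec_eigenvectorBasis i
  apply (WithLp.equiv 2 (Fin n → ℝ)).injective
  simpa using h

lemma quadAux_eq_sum {M : Matrix (Fin n) (Fin n) ℝ} (hM : M.IsHermitian)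
    (x : EuclideanSpace ℝ (Fin n)) :
    quadAux M x = ∑ i, hM.eigenvalues i *
      (hM.eigenvectorBasis.repr x i * hM.eigenvectorBasis.repr x i) := by
  set b := hM.eigenvectorBasis with hb
  have hT : Matrix.toEuclideanLin M x = ∑ i, b.repr x i • (hM.eigenvalues i • b i) := by
    conv_lhs => rw [← b.sum_repr x]
    rw [map_sum]
    exact Finset.sum_congr rfl fun i _ => by rw [LinearMap.map_smul, toEuclideanLin_eigenAux hM i]
  rw [quadAux, hT, inner_sum]
  refine Finset.sum_congr rfl fun i _ => ?_
  rw [inner_smul_right, inner_smul_right, real_inner_comm, ← b.repr_apply_apply]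
  ring

/-- span of a subfamily of an orthonormal basis -/
noncomputable def sspan (b : OrthonormalBasis (Fin n) ℝ (EuclideanSpace ℝ (Fin n)))
    (s : Set (Fin n)) : Submodule ℝ (EuclideanSpace ℝ (Fin n)) :=
  Submodule.span ℝ (Set.range fun i : s => b i)

lemma finrank_sspan (b : OrthonormalBasis (Fin n) ℝ (EuclideanSpace ℝ (Fin n)))
    (s : Set (Fin n)) [Fintype s] :
    Module.finrank ℝ (sspan b s) = Fintype.card s := by
  exact finrank_span_eq_card
    (b.orthonormal.linearIndependent.comp (Subtype.val : s → Fin n) Subtype.val_injective)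

lemma repr_eq_zero_of_mem_sspan (b : OrthonormalBasis (Fin n) ℝ (EuclideanSpace ℝ (Fin n)))
    {s : Set (Fin n)} {x : EuclideanSpace ℝ (Fin n)} (hx : x ∈ sspan b s)
    {j : Fin n} (hj : j ∉ s) : b.repr x j = 0 := by
  rw [b.repr_apply_apply]
  induction hx using Submodule.span_induction with
  | mem y hy =>
      obtain ⟨i, rfl⟩ := hy
      exact b.orthonormal.2 (fun h => hj (h ▸ i.2))
  | zero => simp
  | add y z _ _ hy hz => rw [inner_add_right, hy, hz, add_zero]
  | smul a y _ hy => rw [inner_smul_right, hy, mul_zero]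

lemma quadAux_pos_of {M : Matrix (Fin n) (Fin n) ℝ} (hM : M.IsHermitian)
    {s : Set (Fin n)} (hs : ∀ i ∈ s, 0 < hM.eigenvalues i)
    {x : EuclideanSpace ℝ (Fin n)} (hx : x ∈ sspan hM.eigenvectorBasis s) (hx0 : x ≠ 0) :
    0 < quadAux M x := by
  set b := hM.eigenvectorBasis with hb
  rw [quadAux_eq_sum hM x]
  have h0 : ∀ i, i ∉ s → b.repr x i = 0 := fun i hi => repr_eq_zero_of_mem_sspan b hx hi
  have hnonneg : ∀ i ∈ Finset.univ, 0 ≤ hM.eigenvalues i * (b.repr x i * b.repr x i) := by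
    intro i _
    by_cases hi : i ∈ s
    · exact mul_nonneg (hs i hi).le (mul_self_nonneg _)
    · rw [h0 i hi]; ring_nf; exact le_refl 0
  have hne : b.repr x ≠ 0 := fun h => hx0 (by simpa using b.repr.map_eq_zero_iff.mp h)
  obtain ⟨i, hi⟩ : ∃ i, b.repr x i ≠ 0 := by
    by_contra! h; exact hne (by ext j; simpa using h j)
  have his : i ∈ s := by by_contra h; exact hi (h0 i h)
  refine Finset.sum_pos' hnonneg ⟨i, Finset.mem_univ i, ?_⟩
  exact mul_pos (hs i his) (mul_self_pos.mpr hi)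

lemma quadAux_nonpos_of {M : Matrix (Fin n) (Fin n) ℝ} (hM : M.IsHermitian)
    {s : Set (Fin n)} (hs : ∀ i ∈ s, hM.eigenvalues i ≤ 0)
    {x : EuclideanSpace ℝ (Fin n)} (hx : x ∈ sspan hM.eigenvectorBasis s) :
    quadAux M x ≤ 0 := by
  set b := hM.eigenvectorBasis with hb
  rw [quadAux_eq_sum hM x]
  refine Finset.sum_nonpos fun i _ => ?_
  by_cases hi : i ∈ s
  · have := mul_self_nonneg (b.repr x i)
    nlinarith [hs i hi]
  · rw [repr_eq_zero_of_mem_sspan b hx hi]; ring_nf; exact le_refl 0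

lemma quadAux_neg_of {M : Matrix (Fin n) (Fin n) ℝ} (hM : M.IsHermitian)
    {s : Set (Fin n)} (hs : ∀ i ∈ s, hM.eigenvalues i < 0)
    {x : EuclideanSpace ℝ (Fin n)} (hx : x ∈ sspan hM.eigenvectorBasis s) (hx0 : x ≠ 0) :
    quadAux M x < 0 := by
  set b := hM.eigenvectorBasis with hb
  rw [quadAux_eq_sum hM x]
  have h0 : ∀ i, i ∉ s → b.repr x i = 0 := fun i hi => repr_eq_zero_of_mem_sspan b hx hi
  have hnonpos : ∀ i ∈ Finset.univ, hM.eigenvalues i * (b.repr x i * b.repr x i) ≤ 0 := by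
    intro i _
    by_cases hi : i ∈ s
    · have := mul_self_nonneg (b.repr x i)
      nlinarith [hs i hi]
    · rw [h0 i hi]; ring_nf; exact le_refl 0
  have hne : b.repr x ≠ 0 := fun h => hx0 (by simpa using b.repr.map_eq_zero_iff.mp h)
  obtain ⟨i, hi⟩ : ∃ i, b.repr x i ≠ 0 := by
    by_contra! h; exact hne (by ext j; simpa using h j)
  have his : i ∈ s := by by_contra h; exact hi (h0 i h)
  refine Finset.sum_neg' hnonpos ⟨i, Finset.mem_univ i, ?_⟩
  exact mul_neg_of_neg_of_pos (hs i his) (mul_self_pos.mpr hi)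

lemma quadAux_nonneg_of {M : Matrix (Fin n) (Fin n) ℝ} (hM : M.IsHermitian)
    {s : Set (Fin n)} (hs : ∀ i ∈ s, 0 ≤ hM.eigenvalues i)
    {x : EuclideanSpace ℝ (Fin n)} (hx : x ∈ sspan hM.eigenvectorBasis s) :
    0 ≤ quadAux M x := by
  set b := hM.eigenvectorBasis with hb
  rw [quadAux_eq_sum hM x]
  refine Finset.sum_nonneg fun i _ => ?_
  by_cases hi : i ∈ s
  · exact mul_nonneg (hs i hi) (mul_self_nonneg _)
  · rw [repr_eq_zero_of_mem_sspan b hx hi]; ring_nf; exact le_refl 0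

lemma finrank_add_le_of_sign {f : EuclideanSpace ℝ (Fin n) → ℝ}
    {U W : Submodule ℝ (EuclideanSpace ℝ (Fin n))}
    (hU : ∀ x ∈ U, x ≠ 0 → 0 < f x) (hW : ∀ x ∈ W, f x ≤ 0) :
    Module.finrank ℝ U + Module.finrank ℝ W ≤ n := by
  have hdisj : Disjoint U W := by
    rw [Submodule.disjoint_def]
    intro x hxU hxW
    by_contra hx
    exact absurd (hW x hxW) (not_le.mpr (hU x hxU hx))
  have := Submodule.finrank_add_finrank_le_of_disjoint hdisj
  simpa using this

noncomputable def coordFun (z : Fin n) : EuclideanSpace ℝ (Fin n) →ₗ[ℝ] ℝ :=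
  (LinearMap.proj z).comp (WithLp.linearEquiv 2 ℝ (Fin n → ℝ)).toLinearMap

lemma mem_ker_coordFun {z : Fin n} {x : EuclideanSpace ℝ (Fin n)}
    (hx : x ∈ LinearMap.ker (coordFun z)) : x z = 0 := hx

lemma finrank_inf_ker_ge (z : Fin n) (W : Submodule ℝ (EuclideanSpace ℝ (Fin n))) :
    Module.finrank ℝ W ≤ Module.finrank ℝ (W ⊓ LinearMap.ker (coordFun z) :
      Submodule ℝ (EuclideanSpace ℝ (Fin n))) + 1 := by
  set H := LinearMap.ker (coordFun z)
  have h1 : Module.finrank ℝ (W ⊔ H : Submodule ℝ (EuclideanSpace ℝ (Fin n)))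
      + Module.finrank ℝ (W ⊓ H : Submodule ℝ (EuclideanSpace ℝ (Fin n)))
      = Module.finrank ℝ W + Module.finrank ℝ H :=
    Submodule.finrank_sup_add_finrank_inf_eq W H
  have h2 : Module.finrank ℝ (W ⊔ H : Submodule ℝ (EuclideanSpace ℝ (Fin n))) ≤ n := by
    simpa using Submodule.finrank_le (W ⊔ H)
  have h3 : n ≤ Module.finrank ℝ H + 1 := by
    have := LinearMap.finrank_range_add_finrank_ker (coordFun z)
    have h4 : Module.finrank ℝ (LinearMap.range (coordFun z)) ≤ 1 := by
      simpa using Submodule.finrank_le (LinearMap.range (coordFun z))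
    simp only [finrank_euclideanSpace, Fintype.card_fin] at this
    have h5 : Module.finrank ℝ (LinearMap.ker (coordFun z)) = Module.finrank ℝ H := rfl
    omega
  omega

lemma quadAux_add_two (z : Fin n) (G G' : Matrix (Fin n) (Fin n) ℝ)
    (hdiag : G' z z = G z z + 2)
    (hoff : ∀ i j : Fin n, ¬(i = z ∧ j = z) → G' i j = G i j)
    (x : EuclideanSpace ℝ (Fin n)) :
    quadAux G' x = quadAux G x + 2 * (x z * x z) := by
  have hmv : ∀ i, (G' *ᵥ (WithLp.equiv 2 (Fin n → ℝ) x)) i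
      = (G *ᵥ (WithLp.equiv 2 (Fin n → ℝ) x)) i + (if i = z then 2 * x z else 0) := by
    intro i
    by_cases hi : i = z
    · subst hi
      have hrow : ∀ j, G' i j = G i j + (if j = i then 2 else 0) := by
        intro j
        by_cases hj : j = i
        · subst hj; simpa using hdiag
        · simp [hoff i j (fun h => hj h.2), hj]
      simp only [Matrix.mulVec, dotProduct, if_pos rfl, hrow, add_mul, Finset.sum_add_distrib,
        ite_mul, zero_mul, Finset.sum_ite_eq', Finset.mem_univ, if_true]
      rfl
    · simp only [Matrix.mulVec, dotProduct, if_neg hi, add_zero]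
      exact Finset.sum_congr rfl fun j _ => by rw [hoff i j (fun h => hi h.1)]
  rw [quadAux, quadAux, Matrix.toEuclideanLin_apply, Matrix.toEuclideanLin_apply,
    PiLp.inner_apply, PiLp.inner_apply]
  simp only [WithLp.equiv_apply] at hmv
  simp only [RCLike.inner_apply, starRingEnd_apply, star_trivial,
    hmv, mul_add, add_mul, ite_mul, zero_mul, Finset.sum_add_distrib,
    mul_ite, mul_zero, Finset.sum_ite_eq', Finset.mem_univ, if_true]
  ring

lemma card_union_signs (f : Fin n → ℝ) :
    (Finset.univ.filter fun i => f i ≠ 0).card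
      = (Finset.univ.filter fun i => 0 < f i).card
        + (Finset.univ.filter fun i => f i < 0).card := by
  have hsplit : (Finset.univ.filter fun i => f i ≠ 0)
      = (Finset.univ.filter fun i => 0 < f i) ∪ (Finset.univ.filter fun i => f i < 0) := by
    ext i
    simp only [Finset.mem_filter, Finset.mem_union, Finset.mem_univ, true_and]
    constructor
    · intro h; rcases lt_or_gt_of_ne h with h1 | h1
      · exact Or.inr h1
      · exact Or.inl h1
    · rintro (h | h) <;> intro h0 <;> rw [h0] at h <;> exact lt_irrefl 0 h
  rw [hsplit, Finset.card_union_of_disjoint]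
  rw [Finset.disjoint_left]
  intro a ha hb
  simp only [Finset.mem_filter] at ha hb
  linarith [ha.2, hb.2]

end Aux

/-- If real symmetric `n × n` matrices `G` and `G'` agree in every entry except the
`(1,1)` entry, where `G'₁₁ = G₁₁ + 2`, and `nul G ≠ nul G'`, then
`sig G' = sig G + 1`. -/
theorem sig_eq_add_one_of_diag_entry_add_two
    (n : ℕ) (hn : 0 < n)
    (G G' : Matrix (Fin n) (Fin n) ℝ) (hG : G.IsSymm) (hG' : G'.IsSymm)
    (hdiag : G' ⟨0, hn⟩ ⟨0, hn⟩ = G ⟨0, hn⟩ ⟨0, hn⟩ + 2)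
    (hoff : ∀ i j : Fin n, ¬(i = ⟨0, hn⟩ ∧ j = ⟨0, hn⟩) → G' i j = G i j)
    (hnul : matNul G ≠ matNul G') :
    matSig G' = matSig G + 1 := by
  classical
  set z : Fin n := ⟨0, hn⟩
  have hGh : G.IsHermitian := by
    rw [Matrix.IsHermitian, Matrix.conjTranspose_eq_transpose_of_trivial]; exact hG
  have hG'h : G'.IsHermitian := by
    rw [Matrix.IsHermitian, Matrix.conjTranspose_eq_transpose_of_trivial]; exact hG'
  set lam := hGh.eigenvalues with hlam
  set lam' := hG'h.eigenvalues with hlam'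
  set b := hGh.eigenvectorBasis with hbdef
  set b' := hG'h.eigenvectorBasis with hb'def
  set p := (Finset.univ.filter fun i => 0 < lam i).card with hp
  set m := (Finset.univ.filter fun i => lam i < 0).card with hm
  set p' := (Finset.univ.filter fun i => 0 < lam' i).card with hp'
  set m' := (Finset.univ.filter fun i => lam' i < 0).card with hm'
  have hq : ∀ x, quadAux G' x = quadAux G x + 2 * (x z * x z) :=
    quadAux_add_two z G G' hdiag hoff
  -- cardinalities of span sets
  have cardPos : Fintype.card {i | 0 < lam i} = p := by
    rw [hp]; exact Fintype.card_subtype _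
  have cardNeg : Fintype.card {i | lam i < 0} = m := by
    rw [hm]; exact Fintype.card_subtype _
  have cardPos' : Fintype.card {i | 0 < lam' i} = p' := by
    rw [hp']; exact Fintype.card_subtype _
  have cardNeg' : Fintype.card {i | lam' i < 0} = m' := by
    rw [hm']; exact Fintype.card_subtype _
  have cardNonpos : Fintype.card {i | lam i ≤ 0} + p = n := by
    have hcs : Fintype.card {i | lam i ≤ 0}
        = (Finset.univ.filter fun i => lam i ≤ 0).card := Fintype.card_subtype _
    have h3 : (Finset.univ.filter fun i => 0 < lam i)
        = (Finset.univ.filter fun i => ¬ lam i ≤ 0) :=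
      Finset.filter_congr (fun i _ => by simp [not_le])
    have h2 := Finset.card_filter_add_card_filter_not
      (s := (Finset.univ : Finset (Fin n))) (p := fun i => lam i ≤ 0)
    simp only [Finset.card_univ, Fintype.card_fin] at h2
    rw [hp, h3]
    omega
  have cardNonneg : Fintype.card {i | 0 ≤ lam i} + m = n := by
    have hcs : Fintype.card {i | 0 ≤ lam i}
        = (Finset.univ.filter fun i => 0 ≤ lam i).card := Fintype.card_subtype _
    have h3 : (Finset.univ.filter fun i => lam i < 0)
        = (Finset.univ.filter fun i => ¬ 0 ≤ lam i) :=
      Finset.filter_congr (fun i _ => by simp [not_le])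
    have h2 := Finset.card_filter_add_card_filter_not
      (s := (Finset.univ : Finset (Fin n))) (p := fun i => 0 ≤ lam i)
    simp only [Finset.card_univ, Fintype.card_fin] at h2
    rw [hm, h3]
    omega
  have cardNonpos' : Fintype.card {i | lam' i ≤ 0} + p' = n := by
    have hcs : Fintype.card {i | lam' i ≤ 0}
        = (Finset.univ.filter fun i => lam' i ≤ 0).card := Fintype.card_subtype _
    have h3 : (Finset.univ.filter fun i => 0 < lam' i)
        = (Finset.univ.filter fun i => ¬ lam' i ≤ 0) :=
      Finset.filter_congr (fun i _ => by simp [not_le])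
    have h2 := Finset.card_filter_add_card_filter_not
      (s := (Finset.univ : Finset (Fin n))) (p := fun i => lam' i ≤ 0)
    simp only [Finset.card_univ, Fintype.card_fin] at h2
    rw [hp', h3]
    omega
  have cardNonneg' : Fintype.card {i | 0 ≤ lam' i} + m' = n := by
    have hcs : Fintype.card {i | 0 ≤ lam' i}
        = (Finset.univ.filter fun i => 0 ≤ lam' i).card := Fintype.card_subtype _
    have h3 : (Finset.univ.filter fun i => lam' i < 0)
        = (Finset.univ.filter fun i => ¬ 0 ≤ lam' i) :=
      Finset.filter_congr (fun i _ => by simp [not_le])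
    have h2 := Finset.card_filter_add_card_filter_not
      (s := (Finset.univ : Finset (Fin n))) (p := fun i => 0 ≤ lam' i)
    simp only [Finset.card_univ, Fintype.card_fin] at h2
    rw [hm', h3]
    omega
  -- Inequality 1 : p ≤ p'
  have ineq1 : p ≤ p' := by
    have hU : ∀ x ∈ sspan b {i | 0 < lam i}, x ≠ 0 → 0 < quadAux G' x := by
      intro x hx hx0
      have h1 := quadAux_pos_of hGh (fun i hi => hi) hx hx0
      have h2 := hq x
      nlinarith [mul_self_nonneg (x z)]
    have hW : ∀ x ∈ sspan b' {i | lam' i ≤ 0}, quadAux G' x ≤ 0 :=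
      fun x hx => quadAux_nonpos_of hG'h (fun i hi => hi) hx
    have key := finrank_add_le_of_sign hU hW
    rw [finrank_sspan, finrank_sspan, cardPos] at key
    omega
  -- Inequality 2 : p' ≤ p + 1
  have ineq2 : p' ≤ p + 1 := by
    have hU : ∀ x ∈ sspan b' {i | 0 < lam' i}, x ≠ 0 → 0 < quadAux G' x :=
      fun x hx hx0 => quadAux_pos_of hG'h (fun i hi => hi) hx hx0
    have hW : ∀ x ∈ (sspan b {i | lam i ≤ 0} ⊓ LinearMap.ker (coordFun z) :
        Submodule ℝ (EuclideanSpace ℝ (Fin n))), quadAux G' x ≤ 0 := by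
      intro x hx
      have hxz : x z = 0 := mem_ker_coordFun hx.2
      have h1 := quadAux_nonpos_of hGh (fun i hi => hi) hx.1
      rw [hq x, hxz]
      nlinarith
    have key := finrank_add_le_of_sign hU hW
    have key2 := finrank_inf_ker_ge z (sspan b {i | lam i ≤ 0})
    rw [finrank_sspan] at key2
    rw [finrank_sspan, cardPos'] at key
    omega
  -- Inequality 3 : m' ≤ m
  have ineq3 : m' ≤ m := by
    have hU : ∀ x ∈ sspan b' {i | lam' i < 0}, x ≠ 0 → 0 < -(quadAux G' x) := by
      intro x hx hx0
      have := quadAux_neg_of hG'h (fun i hi => hi) hx hx0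
      linarith
    have hW : ∀ x ∈ sspan b {i | 0 ≤ lam i}, -(quadAux G' x) ≤ 0 := by
      intro x hx
      have h1 := quadAux_nonneg_of hGh (fun i hi => hi) hx
      have h2 := hq x
      nlinarith [mul_self_nonneg (x z)]
    have key := finrank_add_le_of_sign hU hW
    rw [finrank_sspan, finrank_sspan, cardNeg'] at key
    omega
  -- Inequality 4 : m ≤ m' + 1
  have ineq4 : m ≤ m' + 1 := by
    have hU : ∀ x ∈ (sspan b {i | lam i < 0} ⊓ LinearMap.ker (coordFun z) :
        Submodule ℝ (EuclideanSpace ℝ (Fin n))), x ≠ 0 → 0 < -(quadAux G' x) := by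
      intro x hx hx0
      have hxz : x z = 0 := mem_ker_coordFun hx.2
      have h1 := quadAux_neg_of hGh (fun i hi => hi) hx.1 hx0
      rw [hq x, hxz]
      nlinarith
    have hW : ∀ x ∈ sspan b' {i | 0 ≤ lam' i}, -(quadAux G' x) ≤ 0 := by
      intro x hx
      have := quadAux_nonneg_of hG'h (fun i hi => hi) hx
      linarith
    have key := finrank_add_le_of_sign hU hW
    have key2 := finrank_inf_ker_ge z (sspan b {i | lam i < 0})
    rw [finrank_sspan, cardNeg] at key2
    rw [finrank_sspan] at key
    omega
  -- ranks and nullities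
  have hrank : G.rank = p + m := by
    rw [hGh.rank_eq_card_non_zero_eigs, Fintype.card_subtype, hp, hm]
    exact card_union_signs lam
  have hrank' : G'.rank = p' + m' := by
    rw [hG'h.rank_eq_card_non_zero_eigs, Fintype.card_subtype, hp', hm']
    exact card_union_signs lam'
  have hple : p + m ≤ n := by
    have h1 := card_union_signs lam
    have h2 : (Finset.univ.filter fun i => lam i ≠ 0).card ≤ n := by
      simpa using Finset.card_filter_le (Finset.univ : Finset (Fin n))
        (fun i => lam i ≠ 0)
    omega
  have hple' : p' + m' ≤ n := by
    have h1 := card_union_signs lam'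
    have h2 : (Finset.univ.filter fun i => lam' i ≠ 0).card ≤ n := by
      simpa using Finset.card_filter_le (Finset.univ : Finset (Fin n))
        (fun i => lam' i ≠ 0)
    omega
  have hnul2 : p + m ≠ p' + m' := by
    intro h
    apply hnul
    rw [matNul, matNul, hrank, hrank', h]
  -- signatures
  have hsig : matSig G = (p : ℤ) - m := by
    rw [matSig, dif_pos hGh]
  have hsig' : matSig G' = (p' : ℤ) - m' := by
    rw [matSig, dif_pos hG'h]
  rw [hsig, hsig']
  omega
end

section
/- Let n ≥ 1 and g ≥ 1, let A be a symmetric n×n integer matrix, B a symmetric 2g×2g integer matrix, C an arbitrary n×2g integer matrix, and let J_g = [[0, I_g], [−I_g, 0]] be the standard 2g×2g symplectic matrix. Then the symmetric (n+4g)×(n+4g) block matrix M = [[A, C, 0], [Cᵀ, B, J_g], [0, J_gᵀ, 0]] is unimodular congruent over ℤ to the block matrix M₀ = [[A, 0, 0], [0, B, J_g], [0, J_gᵀ, 0]]. -/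
open Matrix in
/-- The symmetric block matrix `M = [[A, C, 0], [Cᵀ, B, J_g], [0, J_gᵀ, 0]]` over `ℤ` is
unimodular congruent to `M₀ = [[A, 0, 0], [0, B, J_g], [0, J_gᵀ, 0]]`. -/
theorem blockMatrix_unimodular_congruent_to_decoupled
    (n g : ℕ) (hn : 1 ≤ n) (hg : 1 ≤ g)
    (A : Matrix (Fin n) (Fin n) ℤ) (hA : A.IsSymm)
    (B : Matrix (Fin g ⊕ Fin g) (Fin g ⊕ Fin g) ℤ) (hB : B.IsSymm)
    (C : Matrix (Fin n) (Fin g ⊕ Fin g) ℤ)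
    (J : Matrix (Fin g ⊕ Fin g) (Fin g ⊕ Fin g) ℤ)
    (hJ : J = Matrix.fromBlocks 0 1 (-1) 0)
    (M : Matrix (Fin n ⊕ ((Fin g ⊕ Fin g) ⊕ (Fin g ⊕ Fin g)))
        (Fin n ⊕ ((Fin g ⊕ Fin g) ⊕ (Fin g ⊕ Fin g))) ℤ)
    (hM : M = Matrix.fromBlocks A (Matrix.fromCols C 0) (Matrix.fromRows Cᵀ 0)
        (Matrix.fromBlocks B J Jᵀ 0)) :
    ∃ U : Matrix (Fin n ⊕ ((Fin g ⊕ Fin g) ⊕ (Fin g ⊕ Fin g)))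
        (Fin n ⊕ ((Fin g ⊕ Fin g) ⊕ (Fin g ⊕ Fin g))) ℤ,
      (U.det = 1 ∨ U.det = -1) ∧
        Matrix.fromBlocks A 0 0 (Matrix.fromBlocks B J Jᵀ 0) = Uᵀ * M * U := by
  have hJJ : J * Jᵀ = 1 := by
    subst hJ
    simp [Matrix.fromBlocks_transpose, Matrix.fromBlocks_multiply,
      ← Matrix.fromBlocks_one]
  set Y : Matrix ((Fin g ⊕ Fin g) ⊕ (Fin g ⊕ Fin g)) (Fin n) ℤ :=
    Matrix.fromRows 0 (-(Jᵀ * Cᵀ)) with hY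
  refine ⟨Matrix.fromBlocks 1 0 Y 1, ?_, ?_⟩
  · left
    rw [Matrix.det_fromBlocks_zero₁₂]
    simp
  · subst hM
    rw [Matrix.fromBlocks_transpose, Matrix.fromBlocks_multiply,
      Matrix.fromBlocks_multiply]
    have h1 : Yᵀ = Matrix.fromCols 0 (-(Jᵀ * Cᵀ))ᵀ := by
      rw [hY, Matrix.transpose_fromRows, Matrix.transpose_zero]
    have hYD : Yᵀ * Matrix.fromBlocks B J Jᵀ 0 = Matrix.fromCols (-C) 0 := by
      rw [h1, Matrix.fromCols_mul_fromBlocks]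
      simp [Matrix.transpose_mul, Matrix.mul_assoc, hJJ]
    have hDY : Matrix.fromBlocks B J Jᵀ 0 * Y = Matrix.fromRows (-Cᵀ) 0 := by
      rw [hY, Matrix.fromBlocks_mul_fromRows]
      have : J * (Jᵀ * Cᵀ) = Cᵀ := by rw [← Matrix.mul_assoc, hJJ, Matrix.one_mul]
      simp [this]
    have hYCr : Yᵀ * Matrix.fromRows Cᵀ (0 : Matrix (Fin g ⊕ Fin g) (Fin n) ℤ) = 0 := by
      rw [h1, Matrix.fromCols_mul_fromRows]
      simp
    have hCcY : Matrix.fromCols C (0 : Matrix (Fin n) (Fin g ⊕ Fin g) ℤ) * Y = 0 := by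
      rw [hY, Matrix.fromCols_mul_fromRows]
      simp
    have hNCcY : Matrix.fromCols (-C) (0 : Matrix (Fin n) (Fin g ⊕ Fin g) ℤ) * Y = 0 := by
      rw [hY, Matrix.fromCols_mul_fromRows]
      simp
    simp only [Matrix.transpose_one, Matrix.one_mul, Matrix.mul_one, Matrix.transpose_zero,
      Matrix.zero_mul, Matrix.mul_zero, Matrix.add_mul, hYD, hDY, hYCr, hCcY, hNCcY,
      add_zero, zero_add]
    ext i j
    rcases i with i | (i | i) <;> rcases j with j | (j | j) <;>
      simp [Matrix.add_apply, Matrix.fromCols_apply_inl, Matrix.fromCols_apply_inr,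
        Matrix.fromRows_apply_inl, Matrix.fromRows_apply_inr]
end

section
/- Let n ≥ 1 and g ≥ 1, let A be a real symmetric n×n matrix, B a real symmetric 2g×2g matrix, C an arbitrary real n×2g matrix, and let J_g = [[0, I_g], [−I_g, 0]] be the standard 2g×2g symplectic matrix. Then the symmetric (n+4g)×(n+4g) block matrix M = [[A, C, 0], [Cᵀ, B, J_g], [0, J_gᵀ, 0]] satisfies nul(M) = nul(A). -/
open Matrix in
/-- Rank of a block diagonal matrix whose lower block has trivial kernel. -/
lemma rank_fromBlocks_diag_aux {m n : Type} [Fintype m] [Fintype n] [DecidableEq m] [DecidableEq n]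
    (A : Matrix m m ℝ) (K : Matrix n n ℝ) (hK : ∀ v : n → ℝ, K.mulVec v = 0 → v = 0) :
    (fromBlocks A 0 0 K).rank = A.rank + Fintype.card n := by
  classical
  have hmem : ∀ v : (m ⊕ n) → ℝ,
      (fromBlocks A (0 : Matrix m n ℝ) (0 : Matrix n m ℝ) K).mulVec v = 0 ↔
      (A.mulVec (v ∘ Sum.inl) = 0 ∧ v ∘ Sum.inr = 0) := by
    intro v
    rw [fromBlocks_mulVec]
    simp only [zero_mulVec, add_zero, zero_add]
    constructor
    · intro h
      have h1 : A.mulVec (v ∘ Sum.inl) = 0 := by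
        funext i; exact congrFun h (Sum.inl i)
      have h2 : K.mulVec (v ∘ Sum.inr) = 0 := by
        funext i; exact congrFun h (Sum.inr i)
      exact ⟨h1, hK _ h2⟩
    · rintro ⟨h1, h2⟩
      funext i
      cases i with
      | inl i => exact congrFun h1 i
      | inr i =>
        have : K.mulVec (v ∘ Sum.inr) = 0 := by rw [h2, mulVec_zero]
        exact congrFun this i
  let e : LinearMap.ker (fromBlocks A (0 : Matrix m n ℝ) (0 : Matrix n m ℝ) K).mulVecLin ≃ₗ[ℝ]
      LinearMap.ker A.mulVecLin :=
  { toFun := fun v => ⟨(v : (m ⊕ n) → ℝ) ∘ Sum.inl, by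
      have := v.2
      rw [LinearMap.mem_ker, mulVecLin_apply] at this ⊢
      exact ((hmem v).1 this).1⟩
    map_add' := fun x y => rfl
    map_smul' := fun c x => rfl
    invFun := fun w => ⟨Sum.elim (w : m → ℝ) 0, by
      rw [LinearMap.mem_ker, mulVecLin_apply, hmem]
      constructor
      · have := w.2
        rw [LinearMap.mem_ker, mulVecLin_apply] at this
        simpa using this
      · funext i; rfl⟩
    left_inv := fun v => by
      ext x
      cases x with
      | inl i => rfl
      | inr i =>
        have := v.2
        rw [LinearMap.mem_ker, mulVecLin_apply, hmem] at this
        exact (congrFun this.2 i).symm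
    right_inv := fun w => by ext i; rfl }
  have hfr := e.finrank_eq
  have h1 := LinearMap.finrank_range_add_finrank_ker
    (fromBlocks A (0 : Matrix m n ℝ) (0 : Matrix n m ℝ) K).mulVecLin
  have h2 := LinearMap.finrank_range_add_finrank_ker A.mulVecLin
  rw [Module.finrank_fintype_fun_eq_card] at h1 h2
  rw [Fintype.card_sum] at h1
  show Module.finrank ℝ
      (LinearMap.range (fromBlocks A (0 : Matrix m n ℝ) (0 : Matrix n m ℝ) K).mulVecLin) = _
  show _ = Module.finrank ℝ (LinearMap.range A.mulVecLin) + Fintype.card n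
  omega

open Matrix in
/-- The symmetric block matrix `M = [[A, C, 0], [Cᵀ, B, J_g], [0, J_gᵀ, 0]]` over `ℝ`
satisfies `nul M = nul A`. -/
theorem blockMatrix_nul_eq_nul
    (n g : ℕ) (hn : 1 ≤ n) (hg : 1 ≤ g)
    (A : Matrix (Fin n) (Fin n) ℝ) (hA : A.IsSymm)
    (B : Matrix (Fin g ⊕ Fin g) (Fin g ⊕ Fin g) ℝ) (hB : B.IsSymm)
    (C : Matrix (Fin n) (Fin g ⊕ Fin g) ℝ)
    (J : Matrix (Fin g ⊕ Fin g) (Fin g ⊕ Fin g) ℝ)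
    (hJ : J = Matrix.fromBlocks 0 1 (-1) 0)
    (M : Matrix (Fin n ⊕ ((Fin g ⊕ Fin g) ⊕ (Fin g ⊕ Fin g)))
        (Fin n ⊕ ((Fin g ⊕ Fin g) ⊕ (Fin g ⊕ Fin g))) ℝ)
    (hM : M = Matrix.fromBlocks A (Matrix.fromCols C 0) (Matrix.fromRows Cᵀ 0)
        (Matrix.fromBlocks B J Jᵀ 0)) :
    matNul M = matNul A := by
  classical
  subst hJ
  set Jm : Matrix (Fin g ⊕ Fin g) (Fin g ⊕ Fin g) ℝ := fromBlocks 0 1 (-1) 0 with hJm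
  have hJJT : Jm * Jmᵀ = 1 := by
    simp [hJm, fromBlocks_transpose, fromBlocks_multiply, ← fromBlocks_one]
  have hJTJ : Jmᵀ * Jm = 1 := mul_eq_one_comm.mp hJJT
  set K : Matrix ((Fin g ⊕ Fin g) ⊕ (Fin g ⊕ Fin g)) ((Fin g ⊕ Fin g) ⊕ (Fin g ⊕ Fin g)) ℝ :=
    fromBlocks B Jm Jmᵀ 0 with hK
  set X : Matrix (Fin n) ((Fin g ⊕ Fin g) ⊕ (Fin g ⊕ Fin g)) ℝ :=
    fromCols 0 (-(C * Jm)) with hX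
  set P := fromBlocks (1 : Matrix (Fin n) (Fin n) ℝ) X
    (0 : Matrix ((Fin g ⊕ Fin g) ⊕ (Fin g ⊕ Fin g)) (Fin n) ℝ)
    (1 : Matrix ((Fin g ⊕ Fin g) ⊕ (Fin g ⊕ Fin g)) ((Fin g ⊕ Fin g) ⊕ (Fin g ⊕ Fin g)) ℝ)
    with hP
  -- the congruence P * M * Pᵀ = diag(A, K)
  have key : P * M * Pᵀ = fromBlocks A 0 0 K := by
    have h1 : X * fromRows Cᵀ (0 : Matrix ((Fin g ⊕ Fin g)) (Fin n) ℝ) = 0 := by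
      rw [hX, fromCols_mul_fromRows]; simp
    have h2 : X * K = fromCols (-C) 0 := by
      rw [hX, hK, fromCols_mul_fromBlocks]
      simp [Matrix.mul_assoc, hJJT]
    have h3 : K * Xᵀ = fromRows (-Cᵀ) 0 := by
      rw [hX, hK, transpose_fromCols, fromBlocks_mul_fromRows]
      simp only [transpose_neg, transpose_mul, Matrix.mul_zero, Matrix.mul_neg,
        ← Matrix.mul_assoc, hJJT, Matrix.one_mul, Matrix.zero_mul, add_zero, zero_add,
        transpose_zero, neg_zero]
    have h4 : fromCols C (0 : Matrix (Fin n) (Fin g ⊕ Fin g) ℝ) + fromCols (-C) 0 = 0 := by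
      ext i (j | j) <;> simp
    have h5 : fromRows Cᵀ (0 : Matrix (Fin g ⊕ Fin g) (Fin n) ℝ) + fromRows (-Cᵀ) 0 = 0 := by
      ext (i | i) j <;> simp
    rw [hM, hP, fromBlocks_transpose, fromBlocks_multiply, fromBlocks_multiply]
    simp [h1, h2, h3, h4, h5]
  -- P has unit determinant
  have hdetP : IsUnit P.det := by
    rw [hP, det_fromBlocks_zero₂₁]
    simp
  have hdetPT : IsUnit Pᵀ.det := by rwa [det_transpose]
  -- rank M = rank (P * M * Pᵀ)
  have hrank1 : (P * M * Pᵀ).rank = M.rank := by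
    rw [rank_mul_eq_left_of_isUnit_det Pᵀ (P * M) hdetPT,
      rank_mul_eq_right_of_isUnit_det P M hdetP]
  -- K has trivial kernel
  have hKinj : ∀ v : ((Fin g ⊕ Fin g) ⊕ (Fin g ⊕ Fin g)) → ℝ, K.mulVec v = 0 → v = 0 := by
    intro v hv
    rw [hK, fromBlocks_mulVec] at hv
    have hinr : Jmᵀ.mulVec (v ∘ Sum.inl) = 0 := by
      funext i
      have := congrFun hv (Sum.inr i)
      simpa using this
    have hvl : v ∘ Sum.inl = 0 := by
      have : Jm.mulVec (Jmᵀ.mulVec (v ∘ Sum.inl)) = v ∘ Sum.inl := by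
        rw [mulVec_mulVec, hJJT, one_mulVec]
      rw [hinr, mulVec_zero] at this
      exact this.symm
    have hinl : Jm.mulVec (v ∘ Sum.inr) = 0 := by
      funext i
      have := congrFun hv (Sum.inl i)
      simpa [hvl] using this
    have hvr : v ∘ Sum.inr = 0 := by
      have : Jmᵀ.mulVec (Jm.mulVec (v ∘ Sum.inr)) = v ∘ Sum.inr := by
        rw [mulVec_mulVec, hJTJ, one_mulVec]
      rw [hinl, mulVec_zero] at this
      exact this.symm
    funext x
    cases x with
    | inl i => exact congrFun hvl i
    | inr i => exact congrFun hvr i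
  have hrank2 : (fromBlocks A 0 0 K).rank
      = A.rank + Fintype.card ((Fin g ⊕ Fin g) ⊕ (Fin g ⊕ Fin g)) :=
    rank_fromBlocks_diag_aux A K hKinj
  have hrankM : M.rank = A.rank + Fintype.card ((Fin g ⊕ Fin g) ⊕ (Fin g ⊕ Fin g)) := by
    rw [← hrank1, key, hrank2]
  have hrA : A.rank ≤ n := by
    simpa using A.rank_le_card_width
  unfold matNul
  rw [hrankM]
  simp only [Fintype.card_sum, Fintype.card_fin]
  omega
end
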